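/- For an obtuse triangle, every interior point q has the property that for at least two of the three sides, the orthogonal projection of q onto the line containing that side lies on the side itself. -/

import Mathlib

open scoped RealInnerProductSpace

/-- `FootOnSide P₁ P₂ q` says: the foot of the perpendicular from `q` to the
line through `P₁, P₂` (i.e. the point of that line closest to `q`) lies on the
closed segment `[P₁, P₂]`. -/
def FootOnSide (P₁ P₂ q : EuclideanSpace ℝ (Fin 2)) : Prop :=
  ∀ p ∈ (affineSpan ℝ {P₁, P₂} : Set (EuclideanSpace ℝ (Fin 2))),
    (∀ r ∈ (affineSpan ℝ {P₁, P₂} : Set (EuclideanSpace ℝ (Fin 2))),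
      dist q p ≤ dist q r) →
    p ∈ segment ℝ P₁ P₂

lemma footOnSide_of {P₁ P₂ q : EuclideanSpace ℝ (Fin 2)} (h : P₁ ≠ P₂)
    (h1 : 0 ≤ ⟪q - P₁, P₂ - P₁⟫) (h2 : ⟪q - P₁, P₂ - P₁⟫ ≤ ⟪P₂ - P₁, P₂ - P₁⟫) :
    FootOnSide P₁ P₂ q := by
  intro p hp hmin
  set v := P₂ - P₁ with hv
  have hvne : v ≠ 0 := sub_ne_zero.mpr h.symm
  have hc : (0:ℝ) < ⟪v, v⟫ := by
    rw [real_inner_self_eq_norm_sq]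
    have : 0 < ‖v‖ := norm_pos_iff.mpr hvne
    positivity
  set c := (⟪v, v⟫ : ℝ)
  set b := (⟪q - P₁, v⟫ : ℝ)
  have hp' : ∃ u : ℝ, u • v = p - P₁ := by
    have := (vadd_left_mem_affineSpan_pair (k := ℝ) (p₁ := P₁) (p₂ := P₂)
      (v := p - P₁)).mp ?_
    · simpa [hv] using this
    · simpa using hp
  obtain ⟨u, hu⟩ := hp'
  have hpu : p = P₁ + u • v := by rw [hu]; abel
  set t := b / c with ht
  have hproj : P₁ + t • v ∈ (affineSpan ℝ {P₁, P₂} : Set (EuclideanSpace ℝ (Fin 2))) := by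
    have := AffineMap.lineMap_mem_affineSpan_pair (k := ℝ) t P₁ P₂
    simpa [AffineMap.lineMap_apply, hv, add_comm] using this
  have hle := hmin _ hproj
  have key : ∀ w : ℝ, dist q (P₁ + w • v) ^ 2 = ‖q - P₁‖ ^ 2 - 2 * w * b + w ^ 2 * c := by
    intro w
    rw [dist_eq_norm]
    have : q - (P₁ + w • v) = (q - P₁) - w • v := by abel
    rw [this, ← real_inner_self_eq_norm_sq, ← real_inner_self_eq_norm_sq]
    simp only [inner_sub_left, inner_sub_right, real_inner_smul_left, real_inner_smul_right]
    have e1 : ⟪v, q⟫ = ⟪q, v⟫ := real_inner_comm _ _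
    have e2 : ⟪v, P₁⟫ = ⟪P₁, v⟫ := real_inner_comm _ _
    have e3 : (b:ℝ) = ⟪q, v⟫ - ⟪P₁, v⟫ := by
      show (⟪q - P₁, v⟫ : ℝ) = _
      rw [inner_sub_left]
    simp only [e1, e2, e3]
    ring
  have hle2 : dist q p ^ 2 ≤ dist q (P₁ + t • v) ^ 2 := by
    have := dist_nonneg (x := q) (y := P₁ + t • v)
    nlinarith [dist_nonneg (x := q) (y := p)]
  rw [hpu] at hle2 ⊢
  rw [key u, key t] at hle2
  have hct : t * c = b := by rw [ht]; field_simp [hc.ne']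
  have hle3 : u^2*c - 2*u*(t*c) ≤ t^2*c - 2*t*(t*c) := by rw [hct]; linarith
  have hut : u = t := by
    by_contra hne
    have h4 : 0 < (u - t)^2 :=
      (sq_nonneg (u - t)).lt_of_ne (Ne.symm (pow_ne_zero 2 (sub_ne_zero.mpr hne)))
    nlinarith
  rw [hut]
  have ht0 : 0 ≤ t := div_nonneg h1 hc.le
  have ht1 : t ≤ 1 := by rw [div_le_one hc]; exact h2
  rw [segment_eq_image_lineMap]
  exact ⟨t, ⟨ht0, ht1⟩, by simp [AffineMap.lineMap_apply, hv]; abel⟩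

lemma footOnSide_comm {P₁ P₂ q : EuclideanSpace ℝ (Fin 2)} (h : FootOnSide P₁ P₂ q) :
    FootOnSide P₂ P₁ q := by
  intro p hp hmin
  rw [Set.pair_comm P₂ P₁] at hp hmin
  rw [segment_symm]
  exact h p hp hmin

lemma inner_expand (x y : EuclideanSpace ℝ (Fin 2)) (a b c e : ℝ) :
    ⟪a • x + b • y, c • x + e • y⟫ =
      a*c*⟪x,x⟫ + (a*e + b*c)*⟪x,y⟫ + b*e*⟪y,y⟫ := by
  simp only [inner_add_left, inner_add_right, real_inner_smul_left, real_inner_smul_right,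
    real_inner_comm y x]
  ring

lemma inner_neg_of_angle_gt {x y : EuclideanSpace ℝ (Fin 2)}
    (h : Real.pi / 2 < InnerProductGeometry.angle x y) : ⟪x, y⟫ < 0 := by
  have hx : x ≠ 0 := by
    rintro rfl
    rw [InnerProductGeometry.angle_zero_left] at h
    linarith
  have hy : y ≠ 0 := by
    rintro rfl
    rw [InnerProductGeometry.angle_zero_right] at h
    linarith
  have hcos : Real.cos (InnerProductGeometry.angle x y) < 0 :=
    Real.cos_neg_of_pi_div_two_lt_of_lt h
      (by linarith [InnerProductGeometry.angle_le_pi x y, Real.pi_pos])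
  rw [← InnerProductGeometry.cos_angle_mul_norm_mul_norm x y]
  have hnx : 0 < ‖x‖ := norm_pos_iff.mpr hx
  have hny : 0 < ‖y‖ := norm_pos_iff.mpr hy
  exact mul_neg_of_neg_of_pos hcos (by positivity)

set_option maxHeartbeats 1000000 in
lemma key_lemma (A B C q : EuclideanSpace ℝ (Fin 2)) (hAB : A ≠ B) (hAC : A ≠ C) (hBC : B ≠ C)
    (hd : ⟪B - A, C - A⟫ < 0) (α β γ : ℝ) (hα : 0 ≤ α) (hβ : 0 ≤ β) (hγ : 0 ≤ γ)
    (hsum : α + β + γ = 1) (hqd : q = α • A + β • B + γ • C) :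
    FootOnSide B C q ∧ (FootOnSide A B q ∨ FootOnSide A C q) := by
  have hα1 : α = 1 - β - γ := by linarith
  subst hα1
  set x := B - A with hx
  set y := C - A with hy
  set nb := (⟪x, x⟫ : ℝ) with hnbdef
  set nc := (⟪y, y⟫ : ℝ) with hncdef
  set d := (⟪x, y⟫ : ℝ) with hddef
  have hnb : 0 ≤ nb := real_inner_self_nonneg
  have hnc : 0 ≤ nc := real_inner_self_nonneg
  have hCS : d ^ 2 ≤ nb * nc := by
    have h := abs_real_inner_le_norm x y
    have hb' : nb = ‖x‖ ^ 2 := real_inner_self_eq_norm_sq x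
    have hc' : nc = ‖y‖ ^ 2 := real_inner_self_eq_norm_sq y
    rw [hb', hc']
    calc d ^ 2 = |d| ^ 2 := (sq_abs d).symm
      _ ≤ (‖x‖ * ‖y‖) ^ 2 := pow_le_pow_left₀ (abs_nonneg d) h 2
      _ = ‖x‖ ^ 2 * ‖y‖ ^ 2 := by ring
  have hqA : q - A = β • x + γ • y := by rw [hqd, hx, hy]; module
  have hqB : q - B = (β - 1) • x + γ • y := by rw [hqd, hx, hy]; module
  have hCB : C - B = (-1 : ℝ) • x + (1 : ℝ) • y := by rw [hx, hy]; module
  have hBA' : B - A = (1 : ℝ) • x + (0 : ℝ) • y := by rw [hx, hy]; module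
  have hCA' : C - A = (0 : ℝ) • x + (1 : ℝ) • y := by rw [hx, hy]; module
  constructor
  · refine footOnSide_of hBC ?_ ?_
    · rw [hqB, hCB, inner_expand]
      nlinarith [mul_nonneg hγ hnc, mul_nonneg (show (0:ℝ) ≤ 1 - β by linarith) hnb,
        mul_nonneg (show (0:ℝ) ≤ 1 - β + γ by linarith) (show (0:ℝ) ≤ -d by linarith)]
    · rw [hqB, hCB, inner_expand, inner_expand]
      nlinarith [mul_nonneg hβ hnb, mul_nonneg (show (0:ℝ) ≤ 1 - γ by linarith) hnc,
        mul_nonneg (show (0:ℝ) ≤ 1 + β - γ by linarith) (show (0:ℝ) ≤ -d by linarith)]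
  · by_cases hc1 : 0 ≤ β * nb + γ * d
    · left
      refine footOnSide_of hAB ?_ ?_
      · rw [hqA, hBA', inner_expand]
        nlinarith
      · rw [hqA, hBA', inner_expand, inner_expand]
        nlinarith [mul_nonneg (show (0:ℝ) ≤ 1 - β by linarith) hnb,
          mul_nonneg hγ (show (0:ℝ) ≤ -d by linarith)]
    · right
      push_neg at hc1
      have hc2 : 0 ≤ γ * nc + β * d := by
        by_contra hc2
        push_neg at hc2
        have hγpos : 0 < γ := by
          rcases lt_or_eq_of_le hγ with h | h
          · exact h
          · exfalso; rw [← h] at hc1; nlinarith [mul_nonneg hβ hnb]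
        have hβpos : 0 < β := by
          rcases lt_or_eq_of_le hβ with h | h
          · exact h
          · exfalso; rw [← h] at hc2; nlinarith [mul_nonneg hγ hnc]
        have h5 : β * nb * (γ * nc) < (γ * (-d)) * (β * (-d)) := by
          apply mul_lt_mul'' (by linarith) (by linarith) (mul_nonneg hβ hnb)
            (mul_nonneg hγ hnc)
        nlinarith [mul_pos hβpos hγpos,
          mul_le_mul_of_nonneg_left hCS (le_of_lt (mul_pos hβpos hγpos))]
      refine footOnSide_of hAC ?_ ?_
      · rw [hqA, hCA', inner_expand]
        nlinarith
      · rw [hqA, hCA', inner_expand, inner_expand]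
        nlinarith [mul_nonneg (show (0:ℝ) ≤ 1 - γ by linarith) hnc,
          mul_nonneg hβ (show (0:ℝ) ≤ -d by linarith)]

set_option maxHeartbeats 1000000 in
/-- For an obtuse triangle, every interior point `q` has the property that for
at least two of the three sides, the orthogonal projection of `q` onto the line
containing that side lies on the side itself. -/
theorem obtuse_triangle_two_feet_on_sides
    (A B C : EuclideanSpace ℝ (Fin 2)) (hABC : ¬ Collinear ℝ ({A, B, C} : Set _))
    (hobt : Real.pi / 2 < EuclideanGeometry.angle B A C ∨
      Real.pi / 2 < EuclideanGeometry.angle A B C ∨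
      Real.pi / 2 < EuclideanGeometry.angle A C B)
    (q : EuclideanSpace ℝ (Fin 2))
    (hq : q ∈ interior (convexHull ℝ ({A, B, C} : Set _))) :
    (FootOnSide A B q ∧ FootOnSide B C q) ∨
    (FootOnSide A B q ∧ FootOnSide A C q) ∨
    (FootOnSide B C q ∧ FootOnSide A C q) := by
  have hAB : A ≠ B := by
    rintro rfl
    exact hABC (by
      have : ({A, A, C} : Set (EuclideanSpace ℝ (Fin 2))) = {A, C} := by simp
      rw [this]; exact collinear_pair ℝ A C)
  have hAC : A ≠ C := by
    rintro rfl
    exact hABC (by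
      have : ({A, B, A} : Set (EuclideanSpace ℝ (Fin 2))) = {A, B} := by
        ext z; simp; tauto
      rw [this]; exact collinear_pair ℝ A B)
  have hBC : B ≠ C := by
    rintro rfl
    exact hABC (by
      have : ({A, B, B} : Set (EuclideanSpace ℝ (Fin 2))) = {A, B} := by simp
      rw [this]; exact collinear_pair ℝ A B)
  have hq' : q ∈ convexHull ℝ ({A, B, C} : Set (EuclideanSpace ℝ (Fin 2))) := interior_subset hq
  rw [show ({A, B, C} : Set (EuclideanSpace ℝ (Fin 2))) = insert A {B, C} from rfl,
    convexHull_insert ⟨B, by simp⟩] at hq'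
  rw [mem_convexJoin] at hq'
  obtain ⟨a', ha', z, hz, hseg⟩ := hq'
  rw [Set.mem_singleton_iff] at ha'
  rw [ha'] at hseg
  rw [convexHull_pair] at hz
  obtain ⟨e, f, he, hf, hef, hz⟩ := hz
  obtain ⟨a, b, ha, hb, hab, hqeq⟩ := hseg
  have hqd : q = a • A + (b * e) • B + (b * f) • C := by
    rw [← hqeq, ← hz]
    module
  have hsum : a + b * e + b * f = 1 := by
    have : b * e + b * f = b := by rw [← mul_add, hef, mul_one]
    linarith
  have hβ : 0 ≤ b * e := mul_nonneg hb he
  have hγ : 0 ≤ b * f := mul_nonneg hb hf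
  have hconv : ∀ P₁ P₂ P₃ : EuclideanSpace ℝ (Fin 2),
      Real.pi / 2 < EuclideanGeometry.angle P₁ P₂ P₃ → ⟪P₁ - P₂, P₃ - P₂⟫ < 0 := by
    intro P₁ P₂ P₃ h
    apply inner_neg_of_angle_gt
    rw [EuclideanGeometry.angle] at h
    simpa [vsub_eq_sub] using h
  rcases hobt with hA | hB | hC
  · have hd := hconv B A C hA
    obtain ⟨h1, h2⟩ := key_lemma A B C q hAB hAC hBC hd a (b*e) (b*f) ha hβ hγ hsum hqd
    rcases h2 with h2 | h2
    · exact Or.inl ⟨h2, h1⟩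
    · exact Or.inr (Or.inr ⟨h1, h2⟩)
  · have hd := hconv A B C hB
    have hqd' : q = (b * e) • B + a • A + (b * f) • C := by rw [hqd]; module
    obtain ⟨h1, h2⟩ := key_lemma B A C q hAB.symm hBC hAC hd (b*e) a (b*f) hβ ha hγ
      (by linarith) hqd'
    rcases h2 with h2 | h2
    · exact Or.inr (Or.inl ⟨footOnSide_comm h2, h1⟩)
    · exact Or.inr (Or.inr ⟨h2, h1⟩)
  · have hd := hconv A C B hC
    have hqd' : q = (b * f) • C + a • A + (b * e) • B := by rw [hqd]; module
    obtain ⟨h1, h2⟩ := key_lemma C A B q hAC.symm hBC.symm hAB hd (b*f) a (b*e) hγ ha hβ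
      (by linarith) hqd'
    rcases h2 with h2 | h2
    · exact Or.inr (Or.inl ⟨h1, footOnSide_comm h2⟩)
    · exact Or.inl ⟨h1, footOnSide_comm h2⟩
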